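/- arXiv:2402.14483 — 6 statements merged into one kernel-verified Lean document; each statement's English description precedes it below -/
import Mathlib

section
/- Let P ∈ ℝ^{n×n} be a symmetric matrix solving the algebraic Riccati equation AᵀP + PA − PBR⁻¹BᵀP + Q = 0, and let K⋆ = −R⁻¹BᵀP. Let x : ℝ → ℝⁿ be differentiable with x'(t) = (A + BK⋆) x(t) for all t ≥ 0 (i.e., the plant in closed loop with the optimal policy u(t) = K⋆x(t)), and suppose x(t) → 0 as t → ∞. Then the improper integral ∫₀^∞ (x(t)ᵀ Q x(t) + (K⋆x(t))ᵀ R (K⋆x(t))) dt converges and equals x(0)ᵀ P x(0) (the optimal cost equals the quadratic value function x₀ᵀPx₀). -/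
open Matrix Filter

lemma hasDerivAt_quadForm {n : ℕ} (P : Matrix (Fin n) (Fin n) ℝ)
    {x : ℝ → Fin n → ℝ} {x' : Fin n → ℝ} {t : ℝ} (h : HasDerivAt x x' t) :
    HasDerivAt (fun s => x s ⬝ᵥ P *ᵥ x s) (x' ⬝ᵥ P *ᵥ x t + x t ⬝ᵥ P *ᵥ x') t := by
  have hcoord : ∀ i, HasDerivAt (fun s => x s i) (x' i) t := fun i => (hasDerivAt_pi.mp h) i
  have hterm : ∀ i, HasDerivAt (fun s => x s i * (P *ᵥ x s) i)
      (x' i * (P *ᵥ x t) i + x t i * (P *ᵥ x') i) t := by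
    intro i
    have hm : HasDerivAt (fun s => (P *ᵥ x s) i) ((P *ᵥ x') i) t := by
      simpa [Matrix.mulVec, dotProduct] using
        HasDerivAt.fun_sum (fun j _ => ((hcoord j).const_mul (P i j)))
    exact (hcoord i).mul hm
  simpa [dotProduct, Finset.sum_add_distrib] using
    HasDerivAt.fun_sum (fun i (_ : i ∈ Finset.univ) => hterm i)

lemma dot_left {p q : ℕ} (M : Matrix (Fin p) (Fin q) ℝ) (u : Fin q → ℝ) (w : Fin p → ℝ) :
    (M *ᵥ u) ⬝ᵥ w = u ⬝ᵥ (Mᵀ *ᵥ w) := by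
  rw [Matrix.dotProduct_mulVec, Matrix.vecMul_transpose]

lemma continuous_quadForm {n : ℕ} (P : Matrix (Fin n) (Fin n) ℝ) :
    Continuous fun v : Fin n → ℝ => v ⬝ᵥ P *ᵥ v := by
  simp only [dotProduct, Matrix.mulVec]
  exact continuous_finset_sum _ fun i _ => (continuous_apply i).mul
    (continuous_finset_sum _ fun j _ => continuous_const.mul (continuous_apply j))

/-- in closed loop with the optimal policy `u = K⋆x`, `K⋆ = −R⁻¹BᵀP`,
with `P` a symmetric solution of the ARE and `x(t) → 0`, the improper LQR cost
integral converges and equals `x(0)ᵀ P x(0)`. -/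
theorem lqr_optimal_cost_eq_value {n m : ℕ}
    (A : Matrix (Fin n) (Fin n) ℝ) (B : Matrix (Fin n) (Fin m) ℝ)
    (Q : Matrix (Fin n) (Fin n) ℝ) (R : Matrix (Fin m) (Fin m) ℝ)
    (P : Matrix (Fin n) (Fin n) ℝ)
    (hQ : Q.PosSemidef) (hR : R.PosDef) (hP : P.IsSymm)
    (hARE : Aᵀ * P + P * A - P * B * R⁻¹ * Bᵀ * P + Q = 0)
    (K : Matrix (Fin m) (Fin n) ℝ) (hK : K = -(R⁻¹ * Bᵀ * P))
    (x : ℝ → Fin n → ℝ)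
    (hx : ∀ t, 0 ≤ t → HasDerivAt x ((A + B * K) *ᵥ x t) t)
    (hx0 : Tendsto x atTop (nhds 0)) :
    Tendsto (fun T => ∫ t in (0:ℝ)..T,
        (x t ⬝ᵥ Q *ᵥ x t + (K *ᵥ x t) ⬝ᵥ R *ᵥ (K *ᵥ x t)))
      atTop (nhds (x 0 ⬝ᵥ P *ᵥ x 0)) := by
  have hRunit : IsUnit R.det := hR.det_pos.ne'.isUnit
  have hRinv : R⁻¹ * R = 1 := Matrix.nonsing_inv_mul R hRunit
  have hRsymm : Rᵀ = R := hR.isHermitian.eq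
  have hRinvT : (R⁻¹)ᵀ = R⁻¹ := by
    rw [Matrix.transpose_nonsing_inv, hRsymm]
  have hKT : Kᵀ = -(P * B * R⁻¹) := by
    rw [hK]
    simp [Matrix.transpose_mul, hRinvT, hP.eq, Matrix.mul_assoc]
  have hKRK : Kᵀ * R * K = P * B * R⁻¹ * Bᵀ * P := by
    rw [hKT, hK]
    simp only [Matrix.neg_mul, Matrix.mul_neg, neg_neg]
    rw [Matrix.mul_assoc (P * B) R⁻¹ R, hRinv, Matrix.mul_one]
    simp [Matrix.mul_assoc]
  have hkey : (A + B * K)ᵀ * P + P * (A + B * K) = -(Q + Kᵀ * R * K) := by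
    have h0 := hARE
    rw [← sub_eq_zero, hKRK, Matrix.transpose_add, Matrix.transpose_mul, hKT, hK]
    simp only [Matrix.add_mul, Matrix.mul_add, Matrix.neg_mul, Matrix.mul_neg, Matrix.mul_assoc] at h0 ⊢
    rw [← h0]
    abel
  have e3v : ∀ v : Fin n → ℝ, (K *ᵥ v) ⬝ᵥ R *ᵥ (K *ᵥ v) = v ⬝ᵥ (Kᵀ * R * K) *ᵥ v := by
    intro v
    rw [Matrix.mulVec_mulVec, dot_left, Matrix.mulVec_mulVec, Matrix.mul_assoc]
  set S : Matrix (Fin n) (Fin n) ℝ := A + B * K with hS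
  have hV : ∀ t, 0 ≤ t → HasDerivAt (fun s => -(x s ⬝ᵥ P *ᵥ x s))
      (x t ⬝ᵥ Q *ᵥ x t + (K *ᵥ x t) ⬝ᵥ R *ᵥ (K *ᵥ x t)) t := by
    intro t ht
    have h := (hasDerivAt_quadForm P (hx t ht)).neg
    have heq : -((S *ᵥ x t) ⬝ᵥ P *ᵥ x t + x t ⬝ᵥ P *ᵥ (S *ᵥ x t))
        = x t ⬝ᵥ Q *ᵥ x t + (K *ᵥ x t) ⬝ᵥ R *ᵥ (K *ᵥ x t) := by
      have e1 : (S *ᵥ x t) ⬝ᵥ P *ᵥ x t = x t ⬝ᵥ (Sᵀ * P) *ᵥ x t := by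
        rw [dot_left, Matrix.mulVec_mulVec]
      have e2 : x t ⬝ᵥ P *ᵥ (S *ᵥ x t) = x t ⬝ᵥ (P * S) *ᵥ x t := by
        rw [Matrix.mulVec_mulVec]
      rw [e1, e2, e3v]
      simp only [← dotProduct_add, ← Matrix.add_mulVec]
      rw [hkey, Matrix.neg_mulVec, dotProduct_neg, neg_neg]
    rw [← heq]
    exact h
  have hcontg : Continuous fun v : Fin n → ℝ =>
      v ⬝ᵥ Q *ᵥ v + (K *ᵥ v) ⬝ᵥ R *ᵥ (K *ᵥ v) := by
    simp only [e3v]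
    exact (continuous_quadForm Q).add (continuous_quadForm _)
  have hInt : ∀ T : ℝ, 0 ≤ T → (∫ t in (0:ℝ)..T,
      (x t ⬝ᵥ Q *ᵥ x t + (K *ᵥ x t) ⬝ᵥ R *ᵥ (K *ᵥ x t)))
      = x 0 ⬝ᵥ P *ᵥ x 0 - x T ⬝ᵥ P *ᵥ x T := by
    intro T hT
    have hcont : ContinuousOn
        (fun t => x t ⬝ᵥ Q *ᵥ x t + (K *ᵥ x t) ⬝ᵥ R *ᵥ (K *ᵥ x t)) (Set.uIcc 0 T) := by
      intro t ht
      rw [Set.uIcc_of_le hT] at ht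
      exact (hcontg.continuousAt.comp (hx t ht.1).continuousAt).continuousWithinAt
    have := intervalIntegral.integral_eq_sub_of_hasDerivAt
      (f := fun s => -(x s ⬝ᵥ P *ᵥ x s))
      (fun t ht => by
        rw [Set.uIcc_of_le hT] at ht
        exact hV t ht.1)
      hcont.intervalIntegrable
    rw [this]; ring
  have hlim : Tendsto (fun T => x 0 ⬝ᵥ P *ᵥ x 0 - x T ⬝ᵥ P *ᵥ x T) atTop
      (nhds (x 0 ⬝ᵥ P *ᵥ x 0)) := by
    have : Tendsto (fun T => x T ⬝ᵥ P *ᵥ x T) atTop (nhds ((0 : Fin n → ℝ) ⬝ᵥ P *ᵥ 0)) :=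
      ((continuous_quadForm P).tendsto 0).comp hx0
    simpa using tendsto_const_nhds.sub this
  refine hlim.congr' ?_
  filter_upwards [eventually_ge_atTop (0:ℝ)] with T hT
  exact (hInt T hT).symm
end

section
/- Let P ∈ ℝ^{n×n} be a symmetric matrix solving the algebraic Riccati equation AᵀP + PA − PBR⁻¹BᵀP + Q = 0. Let u : ℝ → ℝᵐ be continuous and x : ℝ → ℝⁿ differentiable with x'(t) = A x(t) + B u(t) for all t ≥ 0. Then (i) for every T ≥ 0, ∫₀^T (x(t)ᵀ Q x(t) + u(t)ᵀ R u(t)) dt ≥ x(0)ᵀ P x(0) − x(T)ᵀ P x(T); and (ii) if moreover x(t) → 0 as t → ∞ and the (nonnegative) integrand t ↦ x(t)ᵀQx(t) + u(t)ᵀRu(t) is integrable on [0,∞), then ∫₀^∞ (x(t)ᵀ Q x(t) + u(t)ᵀ R u(t)) dt ≥ x(0)ᵀ P x(0) (suboptimality bound: no admissible control achieves cost below x₀ᵀPx₀). -/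
open Matrix Filter MeasureTheory

private lemma cont_mulVec {n m : ℕ} (M : Matrix (Fin n) (Fin m) ℝ) :
    Continuous fun v : Fin m → ℝ => M *ᵥ v := by
  refine continuous_pi fun i => ?_
  simp only [mulVec, dotProduct]
  exact continuous_finset_sum _ fun j _ => (continuous_const.mul (continuous_apply j))

private lemma cont_quad {k : ℕ} (M : Matrix (Fin k) (Fin k) ℝ) :
    Continuous fun v : Fin k → ℝ => v ⬝ᵥ M *ᵥ v := by
  simp only [dotProduct]
  exact continuous_finset_sum _ fun i _ =>
    (continuous_apply i).mul ((continuous_apply i).comp (cont_mulVec M))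

private lemma hasDerivAt_quad {n : ℕ} (P : Matrix (Fin n) (Fin n) ℝ)
    {x : ℝ → Fin n → ℝ} {x' : Fin n → ℝ} {t : ℝ} (hx : HasDerivAt x x' t) :
    HasDerivAt (fun s => x s ⬝ᵥ P *ᵥ x s) (x' ⬝ᵥ P *ᵥ x t + x t ⬝ᵥ P *ᵥ x') t := by
  have hxi : ∀ i, HasDerivAt (fun s => x s i) (x' i) t := fun i => hasDerivAt_pi.mp hx i
  have hPi : ∀ i, HasDerivAt (fun s => (P *ᵥ x s) i) ((P *ᵥ x') i) t := by
    intro i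
    simpa [mulVec, dotProduct] using
      HasDerivAt.fun_sum (u := Finset.univ) (fun j _ => (hxi j).const_mul (P i j))
  have h := HasDerivAt.fun_sum (u := Finset.univ) (fun i _ => (hxi i).fun_mul (hPi i))
  simpa [dotProduct, Finset.sum_add_distrib, mul_comm] using h

private lemma quad_key {n m : ℕ}
    (A : Matrix (Fin n) (Fin n) ℝ) (B : Matrix (Fin n) (Fin m) ℝ)
    (Q : Matrix (Fin n) (Fin n) ℝ) (R : Matrix (Fin m) (Fin m) ℝ)
    (P : Matrix (Fin n) (Fin n) ℝ)
    (hP : Pᵀ = P) (hRs : Rᵀ = R) (hRu : R * R⁻¹ = 1)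
    (hRu2 : P * B * R⁻¹ * R = P * B)
    (hARE : Aᵀ * P + P * A - P * B * R⁻¹ * Bᵀ * P + Q = 0)
    (a : Fin n → ℝ) (b : Fin m → ℝ) :
    (A *ᵥ a + B *ᵥ b) ⬝ᵥ P *ᵥ a + a ⬝ᵥ P *ᵥ (A *ᵥ a + B *ᵥ b)
      = (b + (R⁻¹ * Bᵀ * P) *ᵥ a) ⬝ᵥ R *ᵥ (b + (R⁻¹ * Bᵀ * P) *ᵥ a)
        - (a ⬝ᵥ Q *ᵥ a + b ⬝ᵥ R *ᵥ b) := by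
  have hQ' : Q = P * B * R⁻¹ * Bᵀ * P - Aᵀ * P - P * A := by
    rw [← sub_eq_zero, ← hARE]; abel
  have hRi : (R⁻¹)ᵀ = R⁻¹ := by rw [transpose_nonsing_inv, hRs]
  subst hQ'
  simp only [mulVec_add, add_mulVec, dotProduct_add, add_dotProduct,
    Matrix.sub_mulVec, dotProduct_sub, sub_dotProduct, mulVec_mulVec,
    dotProduct_mulVec, vecMul_vecMul, vecMul_mulVec, Matrix.add_vecMul,
    transpose_mul, transpose_transpose, hP, hRs, hRi,
    ← Matrix.mul_assoc, hRu, Matrix.one_mul, hRu2]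
  ring

/-- suboptimality bound. For any continuous control `u` and the resulting
trajectory `x' = Ax + Bu`: (i) for every `T ≥ 0` the finite-horizon cost is at least
`x(0)ᵀPx(0) − x(T)ᵀPx(T)`; (ii) if moreover `x(t) → 0` and the nonnegative integrand is
integrable on `[0,∞)`, then the total cost is at least `x(0)ᵀPx(0)`. -/
theorem lqr_suboptimality_bound {n m : ℕ}
    (A : Matrix (Fin n) (Fin n) ℝ) (B : Matrix (Fin n) (Fin m) ℝ)
    (Q : Matrix (Fin n) (Fin n) ℝ) (R : Matrix (Fin m) (Fin m) ℝ)
    (P : Matrix (Fin n) (Fin n) ℝ)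
    (hQ : Q.PosSemidef) (hR : R.PosDef) (hP : P.IsSymm)
    (hARE : Aᵀ * P + P * A - P * B * R⁻¹ * Bᵀ * P + Q = 0)
    (x : ℝ → Fin n → ℝ) (u : ℝ → Fin m → ℝ)
    (hu : Continuous u)
    (hx : ∀ t, 0 ≤ t → HasDerivAt x (A *ᵥ x t + B *ᵥ u t) t) :
    (∀ T, 0 ≤ T →
      x 0 ⬝ᵥ P *ᵥ x 0 - x T ⬝ᵥ P *ᵥ x T ≤
        ∫ t in (0:ℝ)..T, (x t ⬝ᵥ Q *ᵥ x t + u t ⬝ᵥ R *ᵥ u t)) ∧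
    (Tendsto x atTop (nhds 0) →
      IntegrableOn (fun t => x t ⬝ᵥ Q *ᵥ x t + u t ⬝ᵥ R *ᵥ u t) (Set.Ici 0) →
      x 0 ⬝ᵥ P *ᵥ x 0 ≤
        ∫ t in Set.Ioi (0:ℝ), (x t ⬝ᵥ Q *ᵥ x t + u t ⬝ᵥ R *ᵥ u t)) := by
  have hRdet : IsUnit R.det := isUnit_iff_ne_zero.mpr hR.det_pos.ne'
  have hRu : R * R⁻¹ = 1 := Matrix.mul_nonsing_inv R hRdet
  have hRu2 : P * B * R⁻¹ * R = P * B := by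
    rw [Matrix.mul_assoc, Matrix.nonsing_inv_mul R hRdet, Matrix.mul_one]
  have hRs : Rᵀ = R := by
    have h : Rᴴ = R := hR.1; rwa [conjTranspose_eq_transpose_of_trivial] at h
  set g : ℝ → ℝ := fun t => x t ⬝ᵥ Q *ᵥ x t + u t ⬝ᵥ R *ᵥ u t with hg
  set w : ℝ → ℝ := fun t =>
    (u t + (R⁻¹ * Bᵀ * P) *ᵥ x t) ⬝ᵥ R *ᵥ (u t + (R⁻¹ * Bᵀ * P) *ᵥ x t) with hw
  have hwpos : ∀ t, 0 ≤ w t := by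
    intro t
    have h := hR.posSemidef.dotProduct_mulVec_nonneg (u t + (R⁻¹ * Bᵀ * P) *ᵥ x t)
    simp only [star_trivial] at h
    simpa [hw, dotProduct_add, add_dotProduct] using h
  have hgpos : ∀ t, 0 ≤ g t := by
    intro t
    have h1 := hQ.dotProduct_mulVec_nonneg (x t)
    have h2 := hR.posSemidef.dotProduct_mulVec_nonneg (u t)
    simp only [star_trivial] at h1 h2
    simpa [hg] using add_nonneg (by simpa using h1) (by simpa using h2)
  have hderiv : ∀ t, 0 ≤ t →
      HasDerivAt (fun s => x s ⬝ᵥ P *ᵥ x s) (w t - g t) t := by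
    intro t ht
    have h := hasDerivAt_quad P (hx t ht)
    rwa [quad_key A B Q R P hP hRs hRu hRu2 hARE (x t) (u t)] at h
  have hxc : ContinuousOn x (Set.Ici 0) := fun t ht =>
    (hx t ht).continuousAt.continuousWithinAt
  have hgc : ContinuousOn g (Set.Ici 0) :=
    ((cont_quad Q).comp_continuousOn hxc).add
      ((cont_quad R).comp_continuousOn hu.continuousOn)
  have hwc : ContinuousOn w (Set.Ici 0) :=
    (cont_quad R).comp_continuousOn
      (hu.continuousOn.add ((cont_mulVec _).comp_continuousOn hxc))
  have part1 : ∀ T, 0 ≤ T →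
      x 0 ⬝ᵥ P *ᵥ x 0 - x T ⬝ᵥ P *ᵥ x T ≤ ∫ t in (0:ℝ)..T, g t := by
    intro T hT
    have hsub : Set.uIcc (0:ℝ) T ⊆ Set.Ici 0 := by
      rw [Set.uIcc_of_le hT]; exact fun t ht => ht.1
    have hgint : IntervalIntegrable g volume 0 T :=
      (hgc.mono hsub).intervalIntegrable
    have hwint : IntervalIntegrable w volume 0 T :=
      (hwc.mono hsub).intervalIntegrable
    have hftc : ∫ t in (0:ℝ)..T, (w t - g t)
        = x T ⬝ᵥ P *ᵥ x T - x 0 ⬝ᵥ P *ᵥ x 0 :=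
      intervalIntegral.integral_eq_sub_of_hasDerivAt
        (fun t ht => hderiv t (hsub ht).out) (hwint.sub hgint)
    have hsplit : ∫ t in (0:ℝ)..T, (w t - g t)
        = (∫ t in (0:ℝ)..T, w t) - ∫ t in (0:ℝ)..T, g t :=
      intervalIntegral.integral_sub hwint hgint
    have hwnn : 0 ≤ ∫ t in (0:ℝ)..T, w t :=
      intervalIntegral.integral_nonneg hT (fun t _ => hwpos t)
    linarith [hftc, hsplit, hwnn]
  refine ⟨part1, fun hx0 hint => ?_⟩
  have hIoi : IntegrableOn g (Set.Ioi 0) := hint.mono_set Set.Ioi_subset_Ici_self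
  have hlim1 : Tendsto (fun T => ∫ t in (0:ℝ)..T, g t) atTop
      (nhds (∫ t in Set.Ioi (0:ℝ), g t)) :=
    intervalIntegral_tendsto_integral_Ioi 0 hIoi tendsto_id
  have hVlim : Tendsto (fun T => x T ⬝ᵥ P *ᵥ x T) atTop (nhds 0) := by
    have := ((cont_quad P).tendsto 0).comp hx0
    simpa [Function.comp_def] using this
  have hlim2 : Tendsto (fun T => x 0 ⬝ᵥ P *ᵥ x 0 - x T ⬝ᵥ P *ᵥ x T) atTop
      (nhds (x 0 ⬝ᵥ P *ᵥ x 0)) := by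
    simpa using (tendsto_const_nhds (x := x 0 ⬝ᵥ P *ᵥ x 0) (f := atTop)).sub hVlim
  exact le_of_tendsto_of_tendsto hlim2 hlim1
    ((eventually_ge_atTop 0).mono fun T hT => part1 T hT)
end

section
/- Let A ∈ ℝ^{n×n}, B ∈ ℝ^{n×m} and λ > 0. Let x, ξ, ζ : ℝ → ℝⁿ and u : ℝ → ℝᵐ be functions with x, ξ, ζ differentiable and, for all t ≥ 0, x'(t) = A x(t) + B u(t), ξ'(t) = −λ ξ(t) + x(t), and ζ'(t) = −λ(x(t) + ζ(t)) − B u(t) (the swapping filters). Define ε̃(t) := A ξ(t) − (x(t) + ζ(t)). Then ε̃'(t) = −λ ε̃(t) for all t, hence ε̃(t) = e^{−λ t} ε̃(0) for all t ≥ 0; consequently, for any function Â : ℝ → ℝ^{n×n}, the prediction error ε(t) := Â(t) ξ(t) − (x(t) + ζ(t)) satisfies ε(t) = (Â(t) − A) ξ(t) + e^{−λ t} ε̃(0), so ε(t) − (Â(t) − A)ξ(t) converges to zero exponentially at rate λ. -/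
open Matrix

/-- swapping-filter error. With plant `x' = Ax + Bu` and swapping filters
`ξ' = −λξ + x`, `ζ' = −λ(x + ζ) − Bu`, the error `ε̃ := Aξ − (x + ζ)` satisfies
`ε̃' = −λε̃`, hence `ε̃(t) = e^{−λt} ε̃(0)` for `t ≥ 0`; consequently, for any estimate
trajectory `Â`, the prediction error `ε := Âξ − (x + ζ)` satisfies
`ε(t) = (Â(t) − A)ξ(t) + e^{−λt} ε̃(0)`. -/
theorem swapping_filter_error {n m : ℕ}
    (A : Matrix (Fin n) (Fin n) ℝ) (B : Matrix (Fin n) (Fin m) ℝ)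
    (lam : ℝ) (hlam : 0 < lam)
    (x ξ ζ : ℝ → Fin n → ℝ) (u : ℝ → Fin m → ℝ)
    (hx : ∀ t, 0 ≤ t → HasDerivAt x (A *ᵥ x t + B *ᵥ u t) t)
    (hξ : ∀ t, 0 ≤ t → HasDerivAt ξ (-lam • ξ t + x t) t)
    (hζ : ∀ t, 0 ≤ t → HasDerivAt ζ (-lam • (x t + ζ t) - B *ᵥ u t) t)
    (etil : ℝ → Fin n → ℝ)
    (hetil : ∀ t, etil t = A *ᵥ ξ t - (x t + ζ t)) :
    (∀ t, 0 ≤ t → HasDerivAt etil (-lam • etil t) t) ∧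
    (∀ t, 0 ≤ t → etil t = Real.exp (-lam * t) • etil 0) ∧
    (∀ (Ahat : ℝ → Matrix (Fin n) (Fin n) ℝ) (t : ℝ), 0 ≤ t →
      Ahat t *ᵥ ξ t - (x t + ζ t) =
        (Ahat t - A) *ᵥ ξ t + Real.exp (-lam * t) • etil 0) := by
  have hef : etil = fun t => A *ᵥ ξ t - (x t + ζ t) := funext hetil
  -- part 1
  have hder : ∀ t, 0 ≤ t → HasDerivAt etil (-lam • etil t) t := by
    intro t ht
    have hA : HasDerivAt (fun s => A *ᵥ ξ s) (A *ᵥ (-lam • ξ t + x t)) t := by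
      have := ((Matrix.mulVecLin A).toContinuousLinearMap).hasFDerivAt.comp_hasDerivAt t
        (hξ t ht)
      simpa [Function.comp_def] using this
    have h1 : HasDerivAt (fun s => A *ᵥ ξ s - (x s + ζ s))
        (A *ᵥ (-lam • ξ t + x t) -
          ((A *ᵥ x t + B *ᵥ u t) + (-lam • (x t + ζ t) - B *ᵥ u t))) t :=
      hA.sub ((hx t ht).add (hζ t ht))
    rw [hef]
    convert h1 using 1
    simp only [Matrix.mulVec_add, Matrix.mulVec_smul, smul_add, smul_sub]
    abel
  -- part 2
  have hexp : ∀ t, 0 ≤ t → etil t = Real.exp (-lam * t) • etil 0 := by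
    intro t ht
    set g : ℝ → Fin n → ℝ := fun s => Real.exp (lam * s) • etil s with hg
    have hgd : ∀ s, 0 ≤ s → HasDerivAt g 0 s := by
      intro s hs
      have hc : HasDerivAt (fun s => Real.exp (lam * s)) (lam * Real.exp (lam * s)) s := by
        simpa [mul_comm, Function.comp_def] using (Real.hasDerivAt_exp (lam * s)).comp s
          ((hasDerivAt_id s).const_mul lam)
      have this : HasDerivAt g (Real.exp (lam * s) • -lam • etil s + (lam * Real.exp (lam * s)) • etil s) s :=
        hc.smul (hder s hs)
      convert this using 1
      simp [smul_smul, smul_add]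
      module
    have hcont : ContinuousOn g (Set.Icc 0 t) := fun s hs =>
      ((hgd s hs.1).continuousAt).continuousWithinAt
    have hkey : g t = g 0 := by
      rcases eq_or_lt_of_le ht with h | h
      · rw [← h]
      · exact constant_of_has_deriv_right_zero hcont
          (fun s hs => ((hgd s hs.1).hasDerivWithinAt)) t (Set.right_mem_Icc.2 ht)
    have : Real.exp (lam * t) • etil t = etil 0 := by
      simpa [hg] using hkey
    have h2 := congrArg (fun v => Real.exp (-lam * t) • v) this
    simpa [smul_smul, ← Real.exp_add] using h2
  refine ⟨hder, hexp, ?_⟩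
  intro Ahat t ht
  have h0 := hexp t ht
  rw [hetil] at h0
  rw [Matrix.sub_mulVec]
  rw [← h0]
  abel
end

section
/- Let B ∈ ℝ^{n×m} and μ > 0. Let P : ℝ → ℝ^{n×n} be differentiable with P(t) symmetric for all t, and let A_cl : ℝ → ℝ^{n×n} and Q̄ : ℝ → ℝ^{n×n} satisfy the time-varying Lyapunov equation A_cl(t)ᵀ P(t) + P(t) A_cl(t) = −Q̄(t) for all t. Let x : ℝ → ℝⁿ be any function and let e : ℝ → ℝⁿ, K̃ : ℝ → ℝ^{m×n} be differentiable with e'(t) = A_cl(t) e(t) + B K̃(t) x(t) and K̃'(t) = −μ Bᵀ P(t) e(t) x(t)ᵀ. Then the function V(t) := e(t)ᵀ P(t) e(t) + μ⁻¹ ‖K̃(t)‖_F² is differentiable with V'(t) = −e(t)ᵀ (Q̄(t) − P'(t)) e(t) for all t. -/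
open Matrix

attribute [local instance] Matrix.normedAddCommGroup Matrix.normedSpace

/-- Squared Frobenius norm of a real matrix. -/
noncomputable def frobSq {p q : ℕ} (M : Matrix (Fin p) (Fin q) ℝ) : ℝ :=
  ∑ i, ∑ j, (M i j) ^ 2

lemma dot_mulVec_transpose {n : ℕ} (M : Matrix (Fin n) (Fin n) ℝ)
    (u w : Fin n → ℝ) : u ⬝ᵥ M *ᵥ w = w ⬝ᵥ Mᵀ *ᵥ u := by
  rw [Matrix.dotProduct_mulVec, ← Matrix.mulVec_transpose, dotProduct_comm]

lemma dot_mulVec_symm {n : ℕ} (M : Matrix (Fin n) (Fin n) ℝ) (hM : M.IsSymm)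
    (u w : Fin n → ℝ) : u ⬝ᵥ M *ᵥ w = w ⬝ᵥ M *ᵥ u := by
  rw [dot_mulVec_transpose, hM.eq]

/-- adaptive Lyapunov identity. With `P(t)` symmetric, the time-varying
Lyapunov equation `A_clᵀP + PA_cl = −Q̄`, error dynamics `e' = A_cl e + BK̃x` and
adaptive law `K̃' = −μBᵀP e xᵀ`, the function `V = eᵀPe + μ⁻¹‖K̃‖_F²` is
differentiable with `V' = −eᵀ(Q̄ − P')e`. -/
theorem adaptive_lyapunov_identity {n m : ℕ}
    (B : Matrix (Fin n) (Fin m) ℝ) (μ : ℝ) (hμ : 0 < μ)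
    (P Pdot Acl Qbar : ℝ → Matrix (Fin n) (Fin n) ℝ)
    (hPderiv : ∀ t, HasDerivAt P (Pdot t) t)
    (hPsymm : ∀ t, (P t).IsSymm)
    (hLyap : ∀ t, (Acl t)ᵀ * P t + P t * Acl t = -(Qbar t))
    (x e : ℝ → Fin n → ℝ) (Ktil : ℝ → Matrix (Fin m) (Fin n) ℝ)
    (he : ∀ t, HasDerivAt e (Acl t *ᵥ e t + (B * Ktil t) *ᵥ x t) t)
    (hKtil : ∀ t, HasDerivAt Ktil
      (-μ • Matrix.vecMulVec ((Bᵀ * P t) *ᵥ e t) (x t)) t) :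
    ∀ t, HasDerivAt (fun s => e s ⬝ᵥ (P s) *ᵥ e s + μ⁻¹ * frobSq (Ktil s))
      (-(e t ⬝ᵥ (Qbar t - Pdot t) *ᵥ e t)) t := by
  intro t
  set a := e t with ha
  set ed := Acl t *ᵥ e t + (B * Ktil t) *ᵥ x t with hed
  set Kd := -μ • Matrix.vecMulVec ((Bᵀ * P t) *ᵥ e t) (x t) with hKd
  -- componentwise derivatives
  have hPij : ∀ i j, HasDerivAt (fun s => P s i j) (Pdot t i j) t := fun i j =>
    (hasDerivAt_pi.mp ((hasDerivAt_pi.mp (hPderiv t)) i)) j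
  have hei : ∀ i, HasDerivAt (fun s => e s i) (ed i) t := fun i =>
    (hasDerivAt_pi.mp (he t)) i
  have hKij : ∀ i j, HasDerivAt (fun s => Ktil s i j) (Kd i j) t := fun i j =>
    (hasDerivAt_pi.mp ((hasDerivAt_pi.mp (hKtil t)) i)) j
  have h1 : HasDerivAt (fun s => e s ⬝ᵥ P s *ᵥ e s)
      (∑ i, ∑ j, ((ed i * P t i j + a i * Pdot t i j) * a j + a i * P t i j * ed j)) t := by
    have hrw : (fun s => e s ⬝ᵥ P s *ᵥ e s)
        = fun s => ∑ i, ∑ j, e s i * P s i j * e s j := by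
      funext s
      simp [dotProduct, Matrix.mulVec, Finset.mul_sum, mul_assoc]
    rw [hrw]
    exact HasDerivAt.fun_sum fun i _ => HasDerivAt.fun_sum fun j _ =>
      ((hei i).fun_mul (hPij i j)).fun_mul (hei j)
  have h2 : HasDerivAt (fun s => μ⁻¹ * frobSq (Ktil s))
      (μ⁻¹ * ∑ i, ∑ j, (2 : ℕ) * Ktil t i j ^ 1 * Kd i j) t := by
    have : HasDerivAt (fun s => frobSq (Ktil s))
        (∑ i, ∑ j, (2 : ℕ) * Ktil t i j ^ 1 * Kd i j) t := by
      unfold frobSq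
      exact HasDerivAt.fun_sum fun i _ => HasDerivAt.fun_sum fun j _ => (hKij i j).fun_pow 2
    exact this.const_mul μ⁻¹
  have h := h1.fun_add h2
  convert h using 1
  · rfl
  · rfl
  -- identity of derivatives
  have hsum1 : (∑ i, ∑ j, ((ed i * P t i j + a i * Pdot t i j) * a j + a i * P t i j * ed j))
      = ed ⬝ᵥ P t *ᵥ a + a ⬝ᵥ Pdot t *ᵥ a + a ⬝ᵥ P t *ᵥ ed := by
    simp only [dotProduct, Matrix.mulVec, Finset.mul_sum, ← Finset.sum_add_distrib]
    refine Finset.sum_congr rfl fun i _ => Finset.sum_congr rfl fun j _ => by ring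
  have hKdij : ∀ i j, Kd i j = -(μ * (((Bᵀ * P t) *ᵥ a) i * x t j)) := by
    intro i j
    simp [hKd, Matrix.vecMulVec_apply, ha]
  have hsum2 : (μ⁻¹ * ∑ i, ∑ j, (2 : ℕ) * Ktil t i j ^ 1 * Kd i j)
      = -2 * (((Bᵀ * P t) *ᵥ a) ⬝ᵥ (Ktil t *ᵥ x t)) := by
    have hinner : (∑ i, ∑ j, (2 : ℕ) * Ktil t i j ^ 1 * Kd i j)
        = -μ * (2 * (((Bᵀ * P t) *ᵥ a) ⬝ᵥ (Ktil t *ᵥ x t))) := by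
      rw [dotProduct, Finset.mul_sum, Finset.mul_sum]
      refine Finset.sum_congr rfl fun i _ => ?_
      simp only [Matrix.mulVec, dotProduct, Finset.mul_sum]
      refine Finset.sum_congr rfl fun j _ => ?_
      rw [hKdij]
      simp only [Matrix.mulVec, dotProduct]
      push_cast
      ring
    rw [hinner]
    field_simp
  rw [hsum1, hsum2]
  -- dot product algebra
  have hPsym := hPsymm t
  have hsym : ed ⬝ᵥ P t *ᵥ a = a ⬝ᵥ P t *ᵥ ed := dot_mulVec_symm _ hPsym _ _
  have hcross : a ⬝ᵥ P t *ᵥ ((B * Ktil t) *ᵥ x t)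
      = ((Bᵀ * P t) *ᵥ a) ⬝ᵥ (Ktil t *ᵥ x t) := by
    have h1 : (Bᵀ * P t) *ᵥ a = a ᵥ* (P t * B) := by
      rw [← Matrix.vecMul_transpose, Matrix.transpose_mul, Matrix.transpose_transpose,
        hPsym.eq]
    rw [Matrix.mulVec_mulVec, Matrix.dotProduct_mulVec, Matrix.dotProduct_mulVec]
    congr 1
    rw [h1, Matrix.vecMul_vecMul, Matrix.mul_assoc]
  have hlyap : a ⬝ᵥ P t *ᵥ (Acl t *ᵥ a) + a ⬝ᵥ P t *ᵥ (Acl t *ᵥ a)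
      = -(a ⬝ᵥ Qbar t *ᵥ a) := by
    have hAP : a ⬝ᵥ ((Acl t)ᵀ * P t) *ᵥ a = a ⬝ᵥ (P t * Acl t) *ᵥ a := by
      rw [dot_mulVec_transpose, Matrix.transpose_mul, Matrix.transpose_transpose,
        hPsym.eq]
    have h3 := congrArg (fun M => a ⬝ᵥ M *ᵥ a) (hLyap t)
    simp only [Matrix.add_mulVec, dotProduct_add, Matrix.neg_mulVec, dotProduct_neg] at h3
    rw [hAP] at h3
    rw [Matrix.mulVec_mulVec]
    linarith
  rw [hsym, hed]
  simp only [Matrix.mulVec_add, dotProduct_add, ← ha]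
  rw [hcross]
  rw [Matrix.sub_mulVec, dotProduct_sub]
  linarith [hlyap]
end

section
/- Under the hypotheses of the adaptive Lyapunov identity — B ∈ ℝ^{n×m}, μ > 0, P : ℝ → ℝ^{n×n} differentiable with P(t) symmetric, A_cl(t)ᵀ P(t) + P(t) A_cl(t) = −Q̄(t), e'(t) = A_cl(t) e(t) + B K̃(t) x(t), K̃'(t) = −μ Bᵀ P(t) e(t) x(t)ᵀ — assume additionally that there exist q > 0 and p_min > 0 such that for all t ≥ 0: Q̄(t) ⪰ q Iₙ, ‖P'(t)‖ ≤ q/2 (operator norm), and P(t) ⪰ p_min Iₙ. Then V(t) := e(t)ᵀ P(t) e(t) + μ⁻¹‖K̃(t)‖_F² satisfies V'(t) ≤ −(q/2)|e(t)|² ≤ 0 for all t ≥ 0, and consequently p_min |e(t)|² + μ⁻¹‖K̃(t)‖_F² ≤ e(0)ᵀ P(0) e(0) + μ⁻¹‖K̃(0)‖_F² for all t ≥ 0 (uniform boundedness of the adaptive tracking errors, Lemma 4). -/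
open Matrix

attribute [local instance] Matrix.normedAddCommGroup Matrix.normedSpace

/-- Euclidean norm of a vector in `ℝⁿ`. -/
noncomputable def vecNorm {n : ℕ} (v : Fin n → ℝ) : ℝ := Real.sqrt (v ⬝ᵥ v)

/-- Operator (induced 2-)norm of a real matrix. -/
noncomputable def opNorm {p q : ℕ} (M : Matrix (Fin p) (Fin q) ℝ) : ℝ :=
  ‖LinearMap.toContinuousLinearMap (Matrix.toEuclideanLin M)‖

lemma aux_mulVec_dot {a b : ℕ} (A : Matrix (Fin a) (Fin b) ℝ) (v : Fin b → ℝ) (w : Fin a → ℝ) :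
    (A *ᵥ v) ⬝ᵥ w = v ⬝ᵥ (Aᵀ *ᵥ w) := by
  rw [dotProduct_comm, Matrix.dotProduct_mulVec, ← Matrix.mulVec_transpose, dotProduct_comm]

lemma aux_dot_self_nonneg {a : ℕ} (v : Fin a → ℝ) : 0 ≤ v ⬝ᵥ v :=
  Finset.sum_nonneg fun i _ => mul_self_nonneg _

lemma aux_vecNorm_sq {a : ℕ} (v : Fin a → ℝ) : vecNorm v ^ 2 = v ⬝ᵥ v :=
  Real.sq_sqrt (aux_dot_self_nonneg v)

lemma aux_hasDerivAt_quadform {n : ℕ} (e : ℝ → Fin n → ℝ) (e' : Fin n → ℝ)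
    (P : ℝ → Matrix (Fin n) (Fin n) ℝ) (P' : Matrix (Fin n) (Fin n) ℝ) (t : ℝ)
    (he : HasDerivAt e e' t) (hP : HasDerivAt P P' t) :
    HasDerivAt (fun s => e s ⬝ᵥ (P s *ᵥ e s))
      (e' ⬝ᵥ (P t *ᵥ e t) + e t ⬝ᵥ (P' *ᵥ e t) + e t ⬝ᵥ (P t *ᵥ e')) t := by
  have hei : ∀ i, HasDerivAt (fun s => e s i) (e' i) t := fun i => hasDerivAt_pi.mp he i
  have hPij : ∀ i j, HasDerivAt (fun s => P s i j) (P' i j) t := fun i j =>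
    hasDerivAt_pi.mp (hasDerivAt_pi.mp hP i) j
  have key : HasDerivAt (fun s => ∑ i, ∑ j, e s i * (P s i j * e s j))
      (∑ i, ∑ j, (e' i * (P t i j * e t j) + e t i * (P' i j * e t j)
        + e t i * (P t i j * e' j))) t := by
    apply HasDerivAt.fun_sum
    intro i _
    apply HasDerivAt.fun_sum
    intro j _
    have := (hei i).fun_mul ((hPij i j).fun_mul (hei j))
    refine this.congr_deriv ?_
    ring
  have hfun : (fun s => e s ⬝ᵥ (P s *ᵥ e s)) = fun s => ∑ i, ∑ j, e s i * (P s i j * e s j) := by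
    funext s
    simp [dotProduct, Matrix.mulVec, Finset.mul_sum]
  rw [hfun]
  convert key using 1
  simp [dotProduct, Matrix.mulVec, Finset.mul_sum, Finset.sum_add_distrib]

lemma aux_hasDerivAt_frobSq {p q : ℕ} (K : ℝ → Matrix (Fin p) (Fin q) ℝ)
    (K' : Matrix (Fin p) (Fin q) ℝ) (t : ℝ) (hK : HasDerivAt K K' t) :
    HasDerivAt (fun s => frobSq (K s)) (∑ i, ∑ j, 2 * K t i j * K' i j) t := by
  have hKij : ∀ i j, HasDerivAt (fun s => K s i j) (K' i j) t := fun i j =>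
    hasDerivAt_pi.mp (hasDerivAt_pi.mp hK i) j
  unfold frobSq
  apply HasDerivAt.fun_sum
  intro i _
  apply HasDerivAt.fun_sum
  intro j _
  have := (hKij i j).fun_pow 2
  refine this.congr_deriv ?_
  push_cast
  ring

lemma aux_dot_le_opNorm {n : ℕ} (M : Matrix (Fin n) (Fin n) ℝ) (v : Fin n → ℝ) :
    v ⬝ᵥ (M *ᵥ v) ≤ opNorm M * (v ⬝ᵥ v) := by
  set V : EuclideanSpace ℝ (Fin n) := (WithLp.equiv 2 _).symm v with hV
  have hTv : Matrix.toEuclideanLin M V = (WithLp.equiv 2 _).symm (M *ᵥ v) := by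
    simp [hV]
  have h1 : v ⬝ᵥ (M *ᵥ v) = (inner ℝ V (Matrix.toEuclideanLin M V) : ℝ) := by
    rw [hTv]
    simp [PiLp.inner_apply, dotProduct, hV, mul_comm]
  have h2 : v ⬝ᵥ v = ‖V‖ ^ 2 := by
    rw [hV, EuclideanSpace.norm_eq, Real.sq_sqrt (Finset.sum_nonneg fun i _ => sq_nonneg _)]
    simp [dotProduct, sq]
  have h3 : (inner ℝ V (Matrix.toEuclideanLin M V) : ℝ) ≤ ‖V‖ * ‖Matrix.toEuclideanLin M V‖ :=
    real_inner_le_norm _ _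
  have h4 : ‖Matrix.toEuclideanLin M V‖ ≤ opNorm M * ‖V‖ := by
    have h := ContinuousLinearMap.le_opNorm
      (LinearMap.toContinuousLinearMap (Matrix.toEuclideanLin M)) V
    rw [LinearMap.coe_toContinuousLinearMap'] at h
    exact h
  calc v ⬝ᵥ (M *ᵥ v) ≤ ‖V‖ * ‖Matrix.toEuclideanLin M V‖ := h1 ▸ h3
    _ ≤ ‖V‖ * (opNorm M * ‖V‖) := by
        apply mul_le_mul_of_nonneg_left h4 (norm_nonneg _)
    _ = opNorm M * (v ⬝ᵥ v) := by rw [h2]; ring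

lemma aux_cross {n m : ℕ} (B : Matrix (Fin n) (Fin m) ℝ)
    (P Acl Qbar : Matrix (Fin n) (Fin n) ℝ) (Ktil : Matrix (Fin m) (Fin n) ℝ)
    (e x : Fin n → ℝ) (hPsymm : P.IsSymm) (hLyap : Aclᵀ * P + P * Acl = -Qbar) :
    (Acl *ᵥ e + (B * Ktil) *ᵥ x) ⬝ᵥ (P *ᵥ e) + e ⬝ᵥ (P *ᵥ (Acl *ᵥ e + (B * Ktil) *ᵥ x))
      - 2 * (((Bᵀ * P) *ᵥ e) ⬝ᵥ (Ktil *ᵥ x)) = -(e ⬝ᵥ (Qbar *ᵥ e)) := by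
  have hA : (Acl *ᵥ e) ⬝ᵥ (P *ᵥ e) + e ⬝ᵥ (P *ᵥ (Acl *ᵥ e)) = -(e ⬝ᵥ (Qbar *ᵥ e)) := by
    rw [aux_mulVec_dot, Matrix.mulVec_mulVec, Matrix.mulVec_mulVec, ← dotProduct_add,
      ← Matrix.add_mulVec, hLyap, Matrix.neg_mulVec, dotProduct_neg]
  have hB1 : ((B * Ktil) *ᵥ x) ⬝ᵥ (P *ᵥ e) = ((Bᵀ * P) *ᵥ e) ⬝ᵥ (Ktil *ᵥ x) := by
    rw [← Matrix.mulVec_mulVec, aux_mulVec_dot B, Matrix.mulVec_mulVec, dotProduct_comm]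
  have hB2 : ((Bᵀ * P) *ᵥ e) ⬝ᵥ (Ktil *ᵥ x) = e ⬝ᵥ (P *ᵥ ((B * Ktil) *ᵥ x)) := by
    rw [aux_mulVec_dot, Matrix.transpose_mul, Matrix.transpose_transpose, hPsymm.eq,
      Matrix.mulVec_mulVec, Matrix.mulVec_mulVec, Matrix.mul_assoc]
  rw [add_dotProduct, Matrix.mulVec_add, dotProduct_add]
  linarith [hA, hB1, hB2]

/-- Lemma 4: under the adaptive Lyapunov identity hypotheses, if
`Q̄(t) ⪰ qIₙ`, `‖P'(t)‖ ≤ q/2` and `P(t) ⪰ p_min Iₙ` for `t ≥ 0`, then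
`V = eᵀPe + μ⁻¹‖K̃‖_F²` satisfies `V' ≤ −(q/2)|e|² ≤ 0` on `t ≥ 0`, and hence
`p_min|e(t)|² + μ⁻¹‖K̃(t)‖_F² ≤ e(0)ᵀP(0)e(0) + μ⁻¹‖K̃(0)‖_F²` for all `t ≥ 0`. -/
theorem adaptive_tracking_boundedness {n m : ℕ}
    (B : Matrix (Fin n) (Fin m) ℝ) (μ : ℝ) (hμ : 0 < μ)
    (P Pdot Acl Qbar : ℝ → Matrix (Fin n) (Fin n) ℝ)
    (hPderiv : ∀ t, HasDerivAt P (Pdot t) t)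
    (hPsymm : ∀ t, (P t).IsSymm)
    (hLyap : ∀ t, (Acl t)ᵀ * P t + P t * Acl t = -(Qbar t))
    (x e : ℝ → Fin n → ℝ) (Ktil : ℝ → Matrix (Fin m) (Fin n) ℝ)
    (he : ∀ t, HasDerivAt e (Acl t *ᵥ e t + (B * Ktil t) *ᵥ x t) t)
    (hKtil : ∀ t, HasDerivAt Ktil
      (-μ • Matrix.vecMulVec ((Bᵀ * P t) *ᵥ e t) (x t)) t)
    (q pmin : ℝ) (hq : 0 < q) (hpmin : 0 < pmin)
    (hQlow : ∀ t, 0 ≤ t → (Qbar t - q • (1 : Matrix (Fin n) (Fin n) ℝ)).PosSemidef)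
    (hPdotSmall : ∀ t, 0 ≤ t → opNorm (Pdot t) ≤ q / 2)
    (hPlow : ∀ t, 0 ≤ t → (P t - pmin • (1 : Matrix (Fin n) (Fin n) ℝ)).PosSemidef)
    (V : ℝ → ℝ)
    (hV : ∀ t, V t = e t ⬝ᵥ (P t) *ᵥ e t + μ⁻¹ * frobSq (Ktil t)) :
    (∀ t, 0 ≤ t →
      deriv V t ≤ -(q / 2) * (vecNorm (e t)) ^ 2 ∧
      -(q / 2) * (vecNorm (e t)) ^ 2 ≤ 0) ∧
    (∀ t, 0 ≤ t →
      pmin * (vecNorm (e t)) ^ 2 + μ⁻¹ * frobSq (Ktil t) ≤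
        e 0 ⬝ᵥ (P 0) *ᵥ e 0 + μ⁻¹ * frobSq (Ktil 0)) := by
  have hVf : V = fun t => e t ⬝ᵥ (P t) *ᵥ e t + μ⁻¹ * frobSq (Ktil t) := funext hV
  subst hVf
  -- derivative of V at every t
  have hVd : ∀ t, HasDerivAt (fun s => e s ⬝ᵥ (P s) *ᵥ e s + μ⁻¹ * frobSq (Ktil s))
      (e t ⬝ᵥ (Pdot t *ᵥ e t) - e t ⬝ᵥ (Qbar t *ᵥ e t)) t := by
    intro t
    set e' := Acl t *ᵥ e t + (B * Ktil t) *ᵥ x t with he'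
    set Kd := -μ • Matrix.vecMulVec ((Bᵀ * P t) *ᵥ e t) (x t) with hKd
    have hquad := aux_hasDerivAt_quadform e e' P (Pdot t) t (he t) (hPderiv t)
    have hfrob := (aux_hasDerivAt_frobSq Ktil Kd t (hKtil t)).const_mul μ⁻¹
    have htot : HasDerivAt (fun s => e s ⬝ᵥ (P s) *ᵥ e s + μ⁻¹ * frobSq (Ktil s)) _ t :=
      hquad.add hfrob
    convert htot using 1
    have hS : μ⁻¹ * (∑ i, ∑ j, 2 * Ktil t i j * Kd i j)
        = -(2 * (((Bᵀ * P t) *ᵥ e t) ⬝ᵥ (Ktil t *ᵥ x t))) := by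
      have hdot : ((Bᵀ * P t) *ᵥ e t) ⬝ᵥ (Ktil t *ᵥ x t)
          = ∑ i, ∑ j, ((Bᵀ * P t) *ᵥ e t) i * (Ktil t i j * x t j) := by
        simp [dotProduct, Matrix.mulVec, Finset.mul_sum]
      have hsum : (∑ i, ∑ j, 2 * Ktil t i j * Kd i j)
          = (-μ) * ∑ i, ∑ j, 2 * (((Bᵀ * P t) *ᵥ e t) i * (Ktil t i j * x t j)) := by
        rw [Finset.mul_sum]
        refine Finset.sum_congr rfl fun i _ => ?_
        rw [Finset.mul_sum]
        refine Finset.sum_congr rfl fun j _ => ?_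
        simp only [hKd, Matrix.smul_apply, Matrix.vecMulVec_apply, smul_eq_mul]
        ring
      have hsum2 : (∑ i, ∑ j, 2 * (((Bᵀ * P t) *ᵥ e t) i * (Ktil t i j * x t j)))
          = 2 * (((Bᵀ * P t) *ᵥ e t) ⬝ᵥ (Ktil t *ᵥ x t)) := by
        rw [hdot, Finset.mul_sum]
        exact Finset.sum_congr rfl fun i _ => by rw [Finset.mul_sum]
      rw [hsum, hsum2, ← mul_assoc, show μ⁻¹ * -μ = -1 by field_simp]
      ring
    rw [hS]
    have hcross := aux_cross B (P t) (Acl t) (Qbar t) (Ktil t) (e t) (x t)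
      (hPsymm t) (hLyap t)
    rw [← he'] at hcross
    linarith [hcross]
  have hderiv : ∀ t, deriv (fun s => e s ⬝ᵥ (P s) *ᵥ e s + μ⁻¹ * frobSq (Ktil s)) t
      = e t ⬝ᵥ (Pdot t *ᵥ e t) - e t ⬝ᵥ (Qbar t *ᵥ e t) := fun t => (hVd t).deriv
  -- pointwise bounds for t ≥ 0
  have hbound : ∀ t, 0 ≤ t →
      e t ⬝ᵥ (Pdot t *ᵥ e t) - e t ⬝ᵥ (Qbar t *ᵥ e t) ≤ -(q / 2) * (vecNorm (e t)) ^ 2 := by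
    intro t ht
    have hQ : q * (e t ⬝ᵥ e t) ≤ e t ⬝ᵥ (Qbar t *ᵥ e t) := by
      have h0 := (hQlow t ht).dotProduct_mulVec_nonneg (e t)
      simp only [star_trivial, Matrix.sub_mulVec, Matrix.smul_mulVec, Matrix.one_mulVec,
        dotProduct_sub, dotProduct_smul, smul_eq_mul] at h0
      linarith
    have hPd : e t ⬝ᵥ (Pdot t *ᵥ e t) ≤ q / 2 * (e t ⬝ᵥ e t) := by
      calc e t ⬝ᵥ (Pdot t *ᵥ e t) ≤ opNorm (Pdot t) * (e t ⬝ᵥ e t) := aux_dot_le_opNorm _ _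
        _ ≤ q / 2 * (e t ⬝ᵥ e t) :=
          mul_le_mul_of_nonneg_right (hPdotSmall t ht) (aux_dot_self_nonneg _)
    rw [aux_vecNorm_sq]
    linarith
  have hnonpos : ∀ t, 0 ≤ t → -(q / 2) * (vecNorm (e t)) ^ 2 ≤ 0 := by
    intro t _
    apply mul_nonpos_of_nonpos_of_nonneg _ (sq_nonneg _)
    linarith
  constructor
  · intro t ht
    exact ⟨by rw [hderiv t]; exact hbound t ht, hnonpos t ht⟩
  · intro t ht
    have hanti : AntitoneOn (fun s => e s ⬝ᵥ (P s) *ᵥ e s + μ⁻¹ * frobSq (Ktil s))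
        (Set.Ici (0 : ℝ)) := by
      apply antitoneOn_of_deriv_nonpos (convex_Ici 0)
      · exact Continuous.continuousOn (by
          have : Differentiable ℝ (fun s => e s ⬝ᵥ (P s) *ᵥ e s + μ⁻¹ * frobSq (Ktil s)) :=
            fun s => (hVd s).differentiableAt
          exact this.continuous)
      · intro s _
        exact ((hVd s).differentiableAt).differentiableWithinAt
      · intro s hs
        rw [interior_Ici] at hs
        rw [hderiv s]
        have hs' : (0 : ℝ) ≤ s := le_of_lt hs
        linarith [hbound s hs', hnonpos s hs']
    have hVle : e t ⬝ᵥ (P t) *ᵥ e t + μ⁻¹ * frobSq (Ktil t)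
        ≤ e 0 ⬝ᵥ (P 0) *ᵥ e 0 + μ⁻¹ * frobSq (Ktil 0) :=
      hanti (Set.mem_Ici.mpr le_rfl) (Set.mem_Ici.mpr ht) ht
    have hP : pmin * (vecNorm (e t)) ^ 2 ≤ e t ⬝ᵥ (P t) *ᵥ e t := by
      have h0 := (hPlow t ht).dotProduct_mulVec_nonneg (e t)
      simp only [star_trivial, Matrix.sub_mulVec, Matrix.smul_mulVec, Matrix.one_mulVec,
        dotProduct_sub, dotProduct_smul, smul_eq_mul] at h0
      rw [aux_vecNorm_sq]
      linarith
    linarith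
end

section
/- Let λ, γ, ν > 0 and let ξ : ℝ → ℝⁿ be a function. Let ε̃ : ℝ → ℝⁿ and Ã : ℝ → ℝ^{n×n} be differentiable and define ε(t) := Ã(t) ξ(t) + ε̃(t). Suppose ε̃'(t) = −λ ε̃(t) and Ã'(t) = −γ ε(t) ξ(t)ᵀ / (1 + ν |ξ(t)| |ε(t)|) for all t (the normalized gradient identifier error dynamics, without parameter projection). Then V_A(t) := λ⁻¹ |ε̃(t)|² + (2γ)⁻¹ ‖Ã(t)‖_F² satisfies V_A'(t) ≤ −|ε̃(t)|² ≤ 0 for all t, and consequently λ⁻¹|ε̃(t)|² + (2γ)⁻¹‖Ã(t)‖_F² ≤ λ⁻¹|ε̃(0)|² + (2γ)⁻¹‖Ã(0)‖_F² for all t ≥ 0 (uniform boundedness of the identifier errors, Lemma 1). -/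
open Matrix

attribute [local instance] Matrix.normedAddCommGroup Matrix.normedSpace

lemma vecNorm_sq {n : ℕ} (v : Fin n → ℝ) : (vecNorm v) ^ 2 = v ⬝ᵥ v := by
  have h : (0:ℝ) ≤ v ⬝ᵥ v := Finset.sum_nonneg fun i _ => mul_self_nonneg _
  rw [vecNorm, sq, Real.mul_self_sqrt h]

lemma dot_self_nonneg {n : ℕ} (v : Fin n → ℝ) : (0:ℝ) ≤ v ⬝ᵥ v :=
  Finset.sum_nonneg fun i _ => mul_self_nonneg _

/-- Lemma 1: identifier Lyapunov decrease. With `ε = Ãξ + ε̃`,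
`ε̃' = −λε̃` and the normalized gradient law `Ã' = −γ εξᵀ/(1 + ν|ξ||ε|)`, the function
`V_A = λ⁻¹|ε̃|² + (2γ)⁻¹‖Ã‖_F²` satisfies `V_A' ≤ −|ε̃|² ≤ 0`, hence
`V_A(t) ≤ V_A(0)` for all `t ≥ 0` (uniform boundedness of the identifier errors). -/
theorem identifier_lyapunov_boundedness {n : ℕ}
    (lam γ ν : ℝ) (hlam : 0 < lam) (hγ : 0 < γ) (hν : 0 < ν)
    (ξ etil : ℝ → Fin n → ℝ) (Atil : ℝ → Matrix (Fin n) (Fin n) ℝ)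
    (eps : ℝ → Fin n → ℝ)
    (heps : ∀ t, eps t = Atil t *ᵥ ξ t + etil t)
    (hetil : ∀ t, HasDerivAt etil (-lam • etil t) t)
    (hAtil : ∀ t, HasDerivAt Atil
      ((-(γ / (1 + ν * vecNorm (ξ t) * vecNorm (eps t)))) •
        Matrix.vecMulVec (eps t) (ξ t)) t)
    (VA : ℝ → ℝ)
    (hVA : ∀ t, VA t = lam⁻¹ * (vecNorm (etil t)) ^ 2 + (2 * γ)⁻¹ * frobSq (Atil t)) :
    (∀ t, deriv VA t ≤ -(vecNorm (etil t)) ^ 2 ∧ -(vecNorm (etil t)) ^ 2 ≤ 0) ∧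
    (∀ t, 0 ≤ t →
      lam⁻¹ * (vecNorm (etil t)) ^ 2 + (2 * γ)⁻¹ * frobSq (Atil t) ≤
        lam⁻¹ * (vecNorm (etil 0)) ^ 2 + (2 * γ)⁻¹ * frobSq (Atil 0)) := by
  set D : ℝ → ℝ := fun t => 1 + ν * vecNorm (ξ t) * vecNorm (eps t) with hDdef
  have hD1 : ∀ t, (1:ℝ) ≤ D t := by
    intro t
    have h1 : 0 ≤ vecNorm (ξ t) := Real.sqrt_nonneg _
    have h2 : 0 ≤ vecNorm (eps t) := Real.sqrt_nonneg _
    have : 0 ≤ ν * vecNorm (ξ t) * vecNorm (eps t) := by positivity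
    simp only [hDdef]; linarith
  have hDpos : ∀ t, (0:ℝ) < D t := fun t => lt_of_lt_of_le one_pos (hD1 t)
  -- rewrite VA as a function
  have hVAeq : VA = fun s => lam⁻¹ * (etil s ⬝ᵥ etil s) + (2 * γ)⁻¹ * frobSq (Atil s) :=
    funext fun s => by rw [hVA, vecNorm_sq]
  -- derivative of VA
  have hVA' : ∀ t, HasDerivAt VA
      (-2 * (etil t ⬝ᵥ etil t) - (D t)⁻¹ * (eps t ⬝ᵥ (Atil t *ᵥ ξ t))) t := by
    intro t
    have hc : ∀ i, HasDerivAt (fun s => etil s i) ((-lam • etil t) i) t :=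
      fun i => hasDerivAt_pi.1 (hetil t) i
    have hdot : HasDerivAt (fun s => etil s ⬝ᵥ etil s)
        (∑ i, ((-lam • etil t) i * etil t i + etil t i * (-lam • etil t) i)) t := by
      simpa [dotProduct] using HasDerivAt.fun_sum (fun i _ => (hc i).fun_mul (hc i))
    have hM : ∀ i j, HasDerivAt (fun s => Atil s i j)
        (((-(γ / D t)) • Matrix.vecMulVec (eps t) (ξ t)) i j) t := by
      intro i j
      exact hasDerivAt_pi.1 (hasDerivAt_pi.1 (hAtil t) i) j
    have hF : HasDerivAt (fun s => frobSq (Atil s))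
        (∑ i, ∑ j, ((2:ℕ) * (Atil t i j) ^ 1 *
          (((-(γ / D t)) • Matrix.vecMulVec (eps t) (ξ t)) i j))) t := by
      unfold frobSq
      exact HasDerivAt.fun_sum fun i _ => HasDerivAt.fun_sum fun j _ => (hM i j).fun_pow 2
    have h := ((hdot.const_mul lam⁻¹).fun_add (hF.const_mul (2 * γ)⁻¹))
    rw [hVAeq]
    refine h.congr_deriv ?_
    have hs1 : ∑ i, ((-lam • etil t) i * etil t i + etil t i * (-lam • etil t) i)
        = -2 * lam * (etil t ⬝ᵥ etil t) := by
      simp only [Pi.smul_apply, smul_eq_mul, dotProduct, Finset.mul_sum]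
      exact Finset.sum_congr rfl fun i _ => by ring
    have hs2 : ∑ i, ∑ j, ((2:ℕ) * (Atil t i j) ^ 1 *
          (((-(γ / D t)) • Matrix.vecMulVec (eps t) (ξ t)) i j))
        = -(2 * γ / D t) * (eps t ⬝ᵥ (Atil t *ᵥ ξ t)) := by
      simp only [Matrix.smul_apply, Matrix.vecMulVec_apply, smul_eq_mul, dotProduct,
        Matrix.mulVec, Finset.mul_sum]
      refine Finset.sum_congr rfl fun i _ => Finset.sum_congr rfl fun j _ => by
        push_cast; ring
    rw [hs1, hs2]
    have hne : (1 + ν * vecNorm (ξ t) * vecNorm (eps t)) ≠ 0 := (hDpos t).ne'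
    simp only [hDdef]
    field_simp
    ring
  have hkey : ∀ t, -2 * (etil t ⬝ᵥ etil t) - (D t)⁻¹ * (eps t ⬝ᵥ (Atil t *ᵥ ξ t))
      ≤ -(vecNorm (etil t)) ^ 2 := by
    intro t
    set e : Fin n → ℝ := eps t
    set u : Fin n → ℝ := etil t
    have hAx : Atil t *ᵥ ξ t = e - u := by
      have := heps t
      simp only [e, u]
      rw [this]; abel
    rw [hAx, vecNorm_sq]
    have hP : e ⬝ᵥ (e - u) = e ⬝ᵥ e - e ⬝ᵥ u := dotProduct_sub _ _ _
    have hsq : (0:ℝ) ≤ (e - u) ⬝ᵥ (e - u) := dot_self_nonneg _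
    have hexp : (e - u) ⬝ᵥ (e - u) = e ⬝ᵥ e - 2 * (e ⬝ᵥ u) + u ⬝ᵥ u := by
      simp only [dotProduct, Pi.sub_apply, Finset.mul_sum, ← Finset.sum_add_distrib,
        ← Finset.sum_sub_distrib]
      exact Finset.sum_congr rfl fun i _ => by ring
    have hS : (0:ℝ) ≤ u ⬝ᵥ u := dot_self_nonneg _
    have hQ : (0:ℝ) ≤ e ⬝ᵥ e := dot_self_nonneg _
    have hD := hD1 t
    have hDp := hDpos t
    have hguts : -(u ⬝ᵥ u) * D t ≤ e ⬝ᵥ (e - u) := by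
      rw [hP]
      nlinarith [mul_nonneg hS (by linarith : (0:ℝ) ≤ D t - 1)]
    have hdiv : -(u ⬝ᵥ u) ≤ (D t)⁻¹ * (e ⬝ᵥ (e - u)) := by
      rw [inv_mul_eq_div]
      exact (le_div_iff₀ hDp).2 hguts
    linarith
  constructor
  · intro t
    refine ⟨?_, neg_nonpos.mpr (sq_nonneg _)⟩
    rw [(hVA' t).deriv]
    exact hkey t
  · intro t ht
    have hdiff : Differentiable ℝ VA := fun t => (hVA' t).differentiableAt
    have hnonpos : ∀ s, deriv VA s ≤ 0 := by
      intro s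
      rw [(hVA' s).deriv]
      calc _ ≤ -(vecNorm (etil s)) ^ 2 := hkey s
        _ ≤ 0 := neg_nonpos.mpr (sq_nonneg _)
    have := antitone_of_deriv_nonpos hdiff hnonpos ht
    rw [hVA, hVA 0] at this
    exact this
end
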